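/- If a graph H has acyclic chromatic number at most k, then every nonempty subset U of its vertices spans at most (k−1)(|U|−1) edges. -/

import Mathlib

open SimpleGraph Finset

lemma forest_edge_bound {W : Type*} [Fintype W] [Nonempty W] (G : SimpleGraph W)
    (hG : G.IsAcyclic) [Fintype G.edgeSet] :
    G.edgeFinset.card + 1 ≤ Fintype.card W := by
  classical
  set root : W → W := fun v => (G.connectedComponentMk v).out with hroot
  have hmkroot : ∀ v, G.connectedComponentMk (root v) = G.connectedComponentMk v :=
    fun v => Quot.out_eq _
  have hreach : ∀ v, G.Reachable v (root v) := fun v =>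
    (ConnectedComponent.exact (hmkroot v)).symm
  set P : ∀ v, G.Path v (root v) := fun v => (hreach v).some.toPath with hP
  have hrootroot : ∀ v, root (root v) = root v := by
    intro v
    show (G.connectedComponentMk (root v)).out = root v
    rw [hmkroot v]
  have hnil : ∀ v, root v = v → ((P v : G.Walk v (root v))).Nil := by
    intro v h
    have hq : (Walk.nil.copy rfl h.symm : G.Walk v (root v)).IsPath := by
      rw [Walk.isPath_copy]; exact Walk.IsPath.nil
    have := hG.path_unique (P v) ⟨Walk.nil.copy rfl h.symm, hq⟩
    have h2 : (P v : G.Walk v (root v)) = Walk.nil.copy rfl h.symm := congrArg Subtype.val this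
    rw [h2, Walk.nil_iff_length_eq]
    simp
  have key : ∀ e ∈ G.edgeFinset, ∃ w : W,
      ((P w : G.Walk w (root w)).edges).head? = some e := by
    intro e he
    rw [mem_edgeFinset] at he
    revert he
    refine Sym2.ind (fun a b hab => ?_) e
    rw [mem_edgeSet] at hab
    set q : G.Walk b (root b) := (P b : G.Walk b (root b)) with hq
    by_cases hmem : a ∈ q.support
    · have hu : (q.takeUntil a hmem).IsPath := (P b).2.takeUntil hmem
      have hsingle : (Walk.cons hab.symm Walk.nil : G.Walk b a).IsPath := by
        simp [hab.ne']
      have huniq := hG.path_unique ⟨q.takeUntil a hmem, hu⟩ ⟨Walk.cons hab.symm Walk.nil, hsingle⟩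
      have h2 : q.takeUntil a hmem = Walk.cons hab.symm Walk.nil := congrArg Subtype.val huniq
      refine ⟨b, ?_⟩
      show (q.edges).head? = some s(a, b)
      conv_lhs => rw [← q.take_spec hmem]
      rw [Walk.edges_append, h2]
      simp [Sym2.eq_swap]
    · have hcc : G.connectedComponentMk a = G.connectedComponentMk b :=
        ConnectedComponent.connectedComponentMk_eq_of_adj hab
      have hr : root b = root a := by
        show (G.connectedComponentMk b).out = (G.connectedComponentMk a).out
        rw [hcc]
      have hcons : ((Walk.cons hab q).copy rfl hr).IsPath := by
        rw [Walk.isPath_copy]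
        exact (P b).2.cons hmem
      have huniq := hG.path_unique (P a) ⟨(Walk.cons hab q).copy rfl hr, hcons⟩
      have h2 : (P a : G.Walk a (root a)) = (Walk.cons hab q).copy rfl hr :=
        congrArg Subtype.val huniq
      refine ⟨a, ?_⟩
      rw [h2, Walk.edges_copy]
      simp
  choose f hf using key
  set F : Sym2 W → W := fun e => if h : e ∈ G.edgeFinset then f e h else Classical.arbitrary W
    with hF
  set T : Finset W := Finset.univ.filter fun w => ¬ ((P w : G.Walk w (root w))).Nil with hT
  have hmaps : ∀ e ∈ G.edgeFinset, F e ∈ T := by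
    intro e he
    rw [hT, mem_filter]
    refine ⟨mem_univ _, ?_⟩
    have hFe : F e = f e he := by rw [hF]; exact dif_pos he
    rw [hFe]
    intro hnil'
    rw [Walk.nil_iff_length_eq] at hnil'
    have hsome := hf e he
    have hL := SimpleGraph.Walk.length_edges (Subtype.val (P (f e he)))
    have hnil'' : (Subtype.val (P (f e he))).length = 0 := hnil'
    have hE : (Subtype.val (P (f e he))).edges = [] :=
      List.eq_nil_of_length_eq_zero (by omega)
    rw [hE] at hsome
    simp at hsome
  have hinj : Set.InjOn F G.edgeFinset := by
    intro e1 h1 e2 h2 heq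
    rw [Finset.mem_coe] at h1 h2
    have hh1 := hf e1 h1
    have hh2 := hf e2 h2
    rw [hF] at heq
    simp only [h1, h2, dif_pos] at heq
    rw [heq] at hh1
    rw [hh2] at hh1
    exact (Option.some.inj hh1).symm
  have hcard : G.edgeFinset.card ≤ T.card := Finset.card_le_card_of_injOn F hmaps hinj
  set r0 : W := root (Classical.arbitrary W) with hr0def
  have hr0T : r0 ∉ T := by
    rw [hT, mem_filter]
    push_neg
    intro _
    have := hnil r0 (hrootroot (Classical.arbitrary W))
    simpa using this
  have hsub : T ⊆ Finset.univ.erase r0 := by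
    intro w hw
    rw [mem_erase]
    exact ⟨fun h => hr0T (h ▸ hw), mem_univ _⟩
  have := Finset.card_le_card hsub
  rw [Finset.card_erase_of_mem (mem_univ _), Finset.card_univ] at this
  have hpos : 1 ≤ Fintype.card W := Fintype.card_pos
  omega

lemma induce_acyclic_mono {V : Type*} (H : SimpleGraph V) {s t : Set V} (hst : s ⊆ t)
    (ht : (H.induce t).IsAcyclic) : (H.induce s).IsAcyclic := by
  intro v w hw
  have hmaps : Set.MapsTo (id : V → V) s t := fun x hx => hst hx
  let φ : H.induce s →g H.induce t := induceHom Hom.id hmaps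
  have hinj : Function.Injective φ := by
    apply induceHom_injective
    exact Set.injOn_id s
  exact ht (w.map φ) (hw.map hinj)

lemma edges_within_bound {V : Type*} [Fintype V] (H : SimpleGraph V) (S : Set V)
    (hS : S.Nonempty) (hac : (H.induce S).IsAcyclic) :
    {e ∈ H.edgeSet | ∀ v ∈ e, v ∈ S}.ncard + 1 ≤ S.ncard := by
  classical
  haveI : Nonempty ↥S := hS.to_subtype
  haveI : Fintype ↥S := Fintype.ofFinite ↥S
  haveI : Fintype (H.induce S).edgeSet := Fintype.ofFinite _
  have hbound := forest_edge_bound (H.induce S) hac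
  have hcardS : Fintype.card ↥S = S.ncard := by
    rw [Set.ncard_eq_toFinset_card', Set.toFinset_card]
  have hsub : {e ∈ H.edgeSet | ∀ v ∈ e, v ∈ S} ⊆ (Sym2.map (Subtype.val : ↥S → V)) '' (H.induce S).edgeSet := by
    rintro e ⟨he, hmem⟩
    revert he hmem
    refine Sym2.ind (fun a b he hmem => ?_) e
    have he' : H.Adj a b := he
    have ha : a ∈ S := hmem a (Sym2.mem_mk_left a b)
    have hb : b ∈ S := hmem b (Sym2.mem_mk_right a b)
    refine ⟨s(⟨a, ha⟩, ⟨b, hb⟩), ?_, rfl⟩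
    rw [mem_edgeSet]
    simp [he']
  have h1 : {e ∈ H.edgeSet | ∀ v ∈ e, v ∈ S}.ncard ≤
      ((Sym2.map (Subtype.val : ↥S → V)) '' (H.induce S).edgeSet).ncard :=
    Set.ncard_le_ncard hsub (Set.Finite.image _ (Set.toFinite _))
  have h2 : ((Sym2.map (Subtype.val : ↥S → V)) '' (H.induce S).edgeSet).ncard ≤
      ((H.induce S).edgeSet).ncard := Set.ncard_image_le (Set.toFinite _)
  have h3 : ((H.induce S).edgeSet).ncard = (H.induce S).edgeFinset.card := by
    rw [Set.ncard_eq_toFinset_card]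
    congr 1
    apply Set.Finite.toFinset_eq_toFinset
  omega

/-- The number of edges of `G` spanned by a vertex set `s`. -/
noncomputable def edgeCountIn {V : Type*} (G : SimpleGraph V) (s : Set V) : ℕ :=
  {e ∈ G.edgeSet | ∀ v ∈ e, v ∈ s}.ncard

/-- If `H` has acyclic chromatic number at most `k` (a proper coloring with `k` colors
in which any two color classes induce a forest), then every nonempty vertex set `U`
spans at most `(k-1)(|U|-1)` edges. -/
theorem acyclic_chromatic_density {V : Type*} [Fintype V] (H : SimpleGraph V) (k : ℕ)
    (c : V → Fin k) (hproper : ∀ a b : V, H.Adj a b → c a ≠ c b)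
    (hacyc : ∀ i j : Fin k, (H.induce {v : V | c v = i ∨ c v = j}).IsAcyclic) :
    ∀ U : Set V, U.Nonempty → edgeCountIn H U ≤ (k - 1) * (U.ncard - 1) := by
  classical
  intro U hU
  obtain ⟨u0, hu0⟩ := hU
  have hk : 1 ≤ k := (c u0).pos
  have hUfin : U.Finite := Set.toFinite U
  have hn : 1 ≤ U.ncard := (Set.ncard_pos hUfin).mpr ⟨u0, hu0⟩
  set C : Finset (Fin k) := U.toFinset.image c with hC
  have hcC : ∀ v ∈ U, c v ∈ C := fun v hv =>
    Finset.mem_image_of_mem c (Set.mem_toFinset.mpr hv)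
  set m := C.card with hm
  have hmk : m ≤ k := by
    have := Finset.card_le_univ C
    simpa using this
  have hm1 : 1 ≤ m := Finset.card_pos.mpr ⟨c u0, hcC u0 hu0⟩
  set P : Finset (Sym2 (Fin k)) := C.sym2.filter (fun s => ¬ s.IsDiag) with hPdef
  set Efin : Finset (Sym2 V) :=
    Finset.univ.filter (fun e => e ∈ H.edgeSet ∧ ∀ v ∈ e, v ∈ U) with hEdef
  have hEcount : edgeCountIn H U = Efin.card := by
    rw [edgeCountIn, ← Set.ncard_coe_finset]
    congr 1
    ext e
    simp [hEdef]
  have hfib : ∀ e ∈ Efin, Sym2.map c e ∈ P := by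
    intro e he
    rw [hEdef, mem_filter] at he
    obtain ⟨-, he1, he2⟩ := he
    revert he1 he2
    refine Sym2.ind (fun a b he1 he2 => ?_) e
    have hadj : H.Adj a b := he1
    rw [hPdef, mem_filter]
    constructor
    · rw [Sym2.map_pair_eq, Finset.mk_mem_sym2_iff]
      exact ⟨hcC a (he2 a (Sym2.mem_mk_left a b)), hcC b (he2 b (Sym2.mem_mk_right a b))⟩
    · rw [Sym2.map_pair_eq, Sym2.mk_isDiag_iff]
      exact hproper a b hadj
  have hsplit : Efin.card = ∑ s ∈ P, (Efin.filter (fun e => Sym2.map c e = s)).card :=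
    Finset.card_eq_sum_card_fiberwise hfib
  -- per-fiber bound
  have hfibbound : ∀ s ∈ P, ((Efin.filter (fun e => Sym2.map c e = s)).card : ℤ)
      ≤ ((U.toFinset.filter (fun v => c v ∈ s)).card : ℤ) - 1 := by
    intro s hs
    induction s using Sym2.ind with
    | _ i j =>
    rw [hPdef, mem_filter, Finset.mk_mem_sym2_iff, Sym2.mk_isDiag_iff] at hs
    obtain ⟨⟨hi, hj⟩, hij⟩ := hs
    set Ss : Set V := {v | v ∈ U ∧ c v ∈ s(i, j)} with hSs
    have hSscoe : Ss = ↑(U.toFinset.filter (fun v => c v ∈ s(i, j))) := by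
      ext v; simp [hSs]
    have hsub2 : Ss ⊆ {v : V | c v = i ∨ c v = j} := by
      rintro v ⟨-, hv⟩
      rwa [Sym2.mem_iff] at hv
    have hac' : (H.induce Ss).IsAcyclic := induce_acyclic_mono H hsub2 (hacyc i j)
    have hSsne : Ss.Nonempty := by
      rw [hC] at hi
      obtain ⟨v, hv, hcv⟩ := Finset.mem_image.mp hi
      exact ⟨v, Set.mem_toFinset.mp hv, by rw [hcv]; exact Sym2.mem_mk_left i j⟩
    have hA := edges_within_bound H Ss hSsne hac'
    have hScard : Ss.ncard = (U.toFinset.filter (fun v => c v ∈ s(i, j))).card := by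
      rw [hSscoe, Set.ncard_coe_finset]
    have hsubE : ↑(Efin.filter (fun e => Sym2.map c e = s(i, j))) ⊆
        {e ∈ H.edgeSet | ∀ v ∈ e, v ∈ Ss} := by
      intro e he
      rw [Finset.mem_coe, mem_filter, hEdef, mem_filter] at he
      obtain ⟨⟨-, he1, he2⟩, hmap⟩ := he
      refine ⟨he1, fun v hv => ⟨he2 v hv, ?_⟩⟩
      rw [← hmap]
      exact Sym2.mem_map.mpr ⟨v, hv, rfl⟩
    have hle : (Efin.filter (fun e => Sym2.map c e = s(i, j))).card ≤
        {e ∈ H.edgeSet | ∀ v ∈ e, v ∈ Ss}.ncard := by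
      rw [← Set.ncard_coe_finset]
      exact Set.ncard_le_ncard hsubE (Set.toFinite _)
    rw [hScard] at hA
    push_cast
    omega
  -- sum of vertex counts
  have hinner : ∀ v ∈ U.toFinset, (P.filter (fun s => c v ∈ s)).card ≤ m - 1 := by
    intro v hv
    have hcv : c v ∈ C := hcC v (Set.mem_toFinset.mp hv)
    have hcard : (C.erase (c v)).card = m - 1 := Finset.card_erase_of_mem hcv
    rw [← hcard]
    apply Finset.card_le_card_of_injOn
      (fun s => if h : c v ∈ s then Sym2.Mem.other' h else c v)
    · intro s hs
      rw [Finset.mem_coe, mem_filter] at hs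
      obtain ⟨hsP, hmem⟩ := hs
      rw [hPdef, mem_filter] at hsP
      obtain ⟨hsC, hdiag⟩ := hsP
      simp only [hmem, dif_pos]
      rw [Finset.mem_coe, Finset.mem_erase]
      constructor
      · rw [← Sym2.other_eq_other']
        exact Sym2.other_ne hdiag hmem
      · exact Finset.mem_sym2_iff.mp hsC _ (Sym2.other_mem' hmem)
    · intro s1 h1 s2 h2 heq
      rw [Finset.mem_coe, mem_filter] at h1 h2
      simp only [h1.2, h2.2, dif_pos] at heq
      rw [← Sym2.other_spec' h1.2, ← Sym2.other_spec' h2.2, heq]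
  have hNsum : ∑ s ∈ P, (U.toFinset.filter (fun v => c v ∈ s)).card ≤ (m - 1) * U.ncard := by
    have : ∀ s ∈ P, (U.toFinset.filter (fun v => c v ∈ s)).card =
        ∑ v ∈ U.toFinset, if c v ∈ s then 1 else 0 := fun s _ => Finset.card_filter _ _
    rw [Finset.sum_congr rfl this, Finset.sum_comm]
    have : ∀ v ∈ U.toFinset, (∑ s ∈ P, if c v ∈ s then 1 else 0) ≤ m - 1 := by
      intro v hv
      rw [← Finset.card_filter]
      exact hinner v hv
    calc ∑ v ∈ U.toFinset, (∑ s ∈ P, if c v ∈ s then 1 else 0)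
        ≤ ∑ _v ∈ U.toFinset, (m - 1) := Finset.sum_le_sum this
      _ = (m - 1) * U.ncard := by
          rw [Finset.sum_const, smul_eq_mul, Set.ncard_eq_toFinset_card', mul_comm]
  -- P has at least m - 1 elements
  have hPcard : m - 1 ≤ P.card := by
    have hcard : (C.erase (c u0)).card = m - 1 := Finset.card_erase_of_mem (hcC u0 hu0)
    rw [← hcard]
    apply Finset.card_le_card_of_injOn (fun j => s(c u0, j))
    · intro j hj
      rw [Finset.mem_coe, Finset.mem_erase] at hj
      rw [hPdef, Finset.mem_coe, mem_filter, Finset.mk_mem_sym2_iff, Sym2.mk_isDiag_iff]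
      exact ⟨⟨hcC u0 hu0, hj.2⟩, fun h => hj.1 h.symm⟩
    · intro j1 h1 j2 h2 heq
      rw [Finset.mem_coe, Finset.mem_erase] at h1 h2
      rw [Sym2.eq_iff] at heq
      rcases heq with ⟨-, h⟩ | ⟨h, h'⟩
      · exact h
        
      · exact absurd h' h1.1
  -- final arithmetic over ℤ
  rw [hEcount]
  zify [hk, hn]
  have e1 : (Efin.card : ℤ) = ∑ s ∈ P, ((Efin.filter (fun e => Sym2.map c e = s)).card : ℤ) := by
    rw [hsplit]; push_cast; ring
  have e2 : (Efin.card : ℤ) ≤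
      ∑ s ∈ P, (((U.toFinset.filter (fun v => c v ∈ s)).card : ℤ) - 1) := by
    rw [e1]; exact Finset.sum_le_sum hfibbound
  have e3 : ∑ s ∈ P, (((U.toFinset.filter (fun v => c v ∈ s)).card : ℤ) - 1) =
      (∑ s ∈ P, ((U.toFinset.filter (fun v => c v ∈ s)).card : ℤ)) - P.card := by
    rw [Finset.sum_sub_distrib]
    simp
  have e4 : (∑ s ∈ P, ((U.toFinset.filter (fun v => c v ∈ s)).card : ℤ)) ≤
      ((m : ℤ) - 1) * U.ncard := by
    have := hNsum
    have hcast : ((∑ s ∈ P, (U.toFinset.filter (fun v => c v ∈ s)).card : ℕ) : ℤ) ≤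
        (((m - 1) * U.ncard : ℕ) : ℤ) := Nat.cast_le.mpr this
    push_cast [hm1] at hcast
    convert hcast using 2
  have e5 : ((m : ℤ) - 1) ≤ P.card := by
    have : ((m - 1 : ℕ) : ℤ) ≤ ((P.card : ℕ) : ℤ) := Nat.cast_le.mpr hPcard
    push_cast [hm1] at this
    convert this using 1
  have hnz : (1 : ℤ) ≤ (U.ncard : ℤ) := by exact_mod_cast hn
  have hmkz : (m : ℤ) ≤ (k : ℤ) := by exact_mod_cast hmk
  have hm1z : (1 : ℤ) ≤ (m : ℤ) := by exact_mod_cast hm1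
  nlinarith [e2, e3, e4, e5]
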